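/- Let F be a map on positive definite matrices that is monotone (X ⪰ Y implies F(X) ⪰ F(Y)) and strictly subhomogeneous (α F(X) ≻ F(αX) and F(α^{-1}X) ≻ α^{-1}F(X) for all X ≻ 0, α > 1). Then F is nonexpansive and, at any pair of distinct points, strictly contractive for the part metric: for all positive definite X ≠ Y, d(F(X), F(Y)) < d(X, Y), where d is the part metric. -/

import Mathlib

open Matrix

namespace PMHelper

variable {n : ℕ}

lemma star_vec (x : Fin n → ℝ) : star x = x := funext fun _ => rfl

lemma herm_smul {c : ℝ} {M : Matrix (Fin n) (Fin n) ℝ} (hM : M.IsHermitian) :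
    (c • M).IsHermitian := by
  unfold Matrix.IsHermitian
  rw [conjTranspose_smul, hM.eq, star_trivial]

lemma quad_smul_sub (α : ℝ) (X Y : Matrix (Fin n) (Fin n) ℝ) (x : Fin n → ℝ) :
    x ⬝ᵥ (α • X - Y) *ᵥ x = α * (x ⬝ᵥ X *ᵥ x) - x ⬝ᵥ Y *ᵥ x := by
  rw [sub_mulVec, dotProduct_sub, smul_mulVec, dotProduct_smul, smul_eq_mul]

lemma quadUB (C : Matrix (Fin n) (Fin n) ℝ) :
    ∃ M > 0, ∀ x : Fin n → ℝ, x ⬝ᵥ C *ᵥ x ≤ M * (x ⬝ᵥ x) := by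
  refine ⟨(∑ i, ∑ j, |C i j|) + 1, by positivity, fun x => ?_⟩
  have hxx : 0 ≤ x ⬝ᵥ x := Finset.sum_nonneg fun i _ => mul_self_nonneg (x i)
  have habs : ∀ i j, |x i * x j| ≤ x ⬝ᵥ x := by
    intro i j
    have hi : x i * x i ≤ x ⬝ᵥ x :=
      Finset.single_le_sum (fun k _ => mul_self_nonneg (x k)) (Finset.mem_univ i)
    have hj : x j * x j ≤ x ⬝ᵥ x :=
      Finset.single_le_sum (fun k _ => mul_self_nonneg (x k)) (Finset.mem_univ j)
    rcases abs_cases (x i * x j) with ⟨h, _⟩ | ⟨h, _⟩ <;> rw [h] <;>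
      nlinarith [sq_nonneg (x i - x j), sq_nonneg (x i + x j)]
  calc x ⬝ᵥ C *ᵥ x = ∑ i, ∑ j, C i j * (x i * x j) := by
        simp only [dotProduct, mulVec, Finset.mul_sum]
        exact Finset.sum_congr rfl fun i _ => Finset.sum_congr rfl fun j _ => by ring
    _ ≤ ∑ i, ∑ j, |C i j| * (x ⬝ᵥ x) := by
        refine Finset.sum_le_sum fun i _ => Finset.sum_le_sum fun j _ => ?_
        calc C i j * (x i * x j) ≤ |C i j * (x i * x j)| := le_abs_self _
          _ = |C i j| * |x i * x j| := abs_mul _ _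
          _ ≤ |C i j| * (x ⬝ᵥ x) := mul_le_mul_of_nonneg_left (habs i j) (abs_nonneg _)
    _ = (∑ i, ∑ j, |C i j|) * (x ⬝ᵥ x) := by rw [Finset.sum_mul]; simp [Finset.sum_mul]
    _ ≤ ((∑ i, ∑ j, |C i j|) + 1) * (x ⬝ᵥ x) := by nlinarith [hxx]

lemma quad_symm {A : Matrix (Fin n) (Fin n) ℝ} (hA : A.IsHermitian) (u v : Fin n → ℝ) :
    u ⬝ᵥ A *ᵥ v = v ⬝ᵥ A *ᵥ u := by
  have ht : Aᵀ = A := by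
    have := hA.eq
    rwa [conjTranspose_eq_transpose_of_trivial] at this
  rw [dotProduct_mulVec, ← ht, vecMul_transpose, ht, dotProduct_comm]

lemma quad_cs {A : Matrix (Fin n) (Fin n) ℝ} (hA : A.PosSemidef) (x y : Fin n → ℝ) :
    (x ⬝ᵥ A *ᵥ y) * (x ⬝ᵥ A *ᵥ y) ≤ (x ⬝ᵥ A *ᵥ x) * (y ⬝ᵥ A *ᵥ y) := by
  have key : ∀ t : ℝ,
      0 ≤ (y ⬝ᵥ A *ᵥ y) * (t * t) + (2 * (x ⬝ᵥ A *ᵥ y)) * t + x ⬝ᵥ A *ᵥ x := by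
    intro t
    have h0 := hA.dotProduct_mulVec_nonneg (x + t • y)
    rw [star_vec] at h0
    have hexp : (x + t • y) ⬝ᵥ A *ᵥ (x + t • y) =
        (y ⬝ᵥ A *ᵥ y) * (t * t) + (2 * (x ⬝ᵥ A *ᵥ y)) * t + x ⬝ᵥ A *ᵥ x := by
      rw [mulVec_add, mulVec_smul, add_dotProduct, smul_dotProduct,
        dotProduct_add, dotProduct_add, dotProduct_smul, dotProduct_smul,
        quad_symm hA.1 y x]
      simp only [smul_eq_mul]
      ring
    rw [hexp] at h0
    exact h0
  have hd := discrim_le_zero key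
  rw [discrim] at hd
  nlinarith [hd]

lemma quadLB {A : Matrix (Fin n) (Fin n) ℝ} (hA : A.PosDef) :
    ∃ m > 0, ∀ x : Fin n → ℝ, m * (x ⬝ᵥ x) ≤ x ⬝ᵥ A *ᵥ x := by
  obtain ⟨K, hK, hKb⟩ := quadUB A⁻¹
  refine ⟨K⁻¹, inv_pos.2 hK, fun x => ?_⟩
  have hxx : 0 ≤ x ⬝ᵥ x := Finset.sum_nonneg fun i _ => mul_self_nonneg (x i)
  have hq : 0 ≤ x ⬝ᵥ A *ᵥ x := by have := hA.posSemidef.dotProduct_mulVec_nonneg x; rwa [star_vec] at this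
  have hinv : A *ᵥ (A⁻¹ *ᵥ x) = x := by
    rw [mulVec_mulVec, Matrix.mul_nonsing_inv _ hA.det_pos.ne'.isUnit, one_mulVec]
  have hcs := quad_cs hA.posSemidef x (A⁻¹ *ᵥ x)
  rw [hinv] at hcs
  have h2 : (A⁻¹ *ᵥ x) ⬝ᵥ x ≤ K * (x ⬝ᵥ x) := by
    rw [dotProduct_comm]; exact hKb x
  rw [inv_mul_le_iff₀ hK]
  rcases eq_or_lt_of_le hxx with h0 | h0
  · rw [← h0]; positivity
  · have hchain : (x ⬝ᵥ x) * (x ⬝ᵥ x) ≤ (K * (x ⬝ᵥ A *ᵥ x)) * (x ⬝ᵥ x) := by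
      calc (x ⬝ᵥ x) * (x ⬝ᵥ x) ≤ (x ⬝ᵥ A *ᵥ x) * ((A⁻¹ *ᵥ x) ⬝ᵥ x) := hcs
        _ ≤ (x ⬝ᵥ A *ᵥ x) * (K * (x ⬝ᵥ x)) := mul_le_mul_of_nonneg_left h2 hq
        _ = (K * (x ⬝ᵥ A *ᵥ x)) * (x ⬝ᵥ x) := by ring
    exact le_of_mul_le_mul_right hchain h0

lemma psd_smul {c : ℝ} (hc : 0 ≤ c) {M : Matrix (Fin n) (Fin n) ℝ} (hM : M.PosSemidef) :
    (c • M).PosSemidef := by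
  refine PosSemidef.of_dotProduct_mulVec_nonneg (herm_smul hM.1) fun x => ?_
  rw [smul_mulVec, dotProduct_smul]
  exact smul_nonneg hc (hM.dotProduct_mulVec_nonneg x)

lemma closed_psd (X Y : Matrix (Fin n) (Fin n) ℝ) (hX : X.IsHermitian) (hY : Y.IsHermitian) :
    IsClosed {α : ℝ | (α • X - Y).PosSemidef} := by
  have hset : {α : ℝ | (α • X - Y).PosSemidef} =
      ⋂ x : Fin n → ℝ, {α : ℝ | 0 ≤ α * (x ⬝ᵥ X *ᵥ x) - x ⬝ᵥ Y *ᵥ x} := by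
    ext α
    simp only [Set.mem_iInter, Set.mem_setOf_eq]
    constructor
    · intro h x
      have := h.dotProduct_mulVec_nonneg x
      rwa [star_vec, quad_smul_sub] at this
    · intro h
      refine PosSemidef.of_dotProduct_mulVec_nonneg ((herm_smul hX).sub hY) fun x => ?_
      rw [star_vec, quad_smul_sub]
      exact h x
  rw [hset]
  refine isClosed_iInter fun x => isClosed_le continuous_const ?_
  exact (continuous_id.mul continuous_const).sub continuous_const

lemma psd_antisymm {X Y : Matrix (Fin n) (Fin n) ℝ}
    (h1 : (X - Y).PosSemidef) (h2 : (Y - X).PosSemidef) : X = Y := by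
  have hq : ∀ x : Fin n → ℝ, x ⬝ᵥ (X - Y) *ᵥ x = 0 := by
    intro x
    have ha := h1.dotProduct_mulVec_nonneg x; rw [star_vec] at ha
    have hb := h2.dotProduct_mulVec_nonneg x; rw [star_vec] at hb
    have hneg : Y - X = -(X - Y) := by abel
    rw [hneg, neg_mulVec, dotProduct_neg] at hb
    linarith
  have hsymm : ∀ i j, (X - Y) j i = (X - Y) i j := by
    intro i j
    have := h1.1.apply i j
    simpa using this
  have hentry : ∀ i j, (X - Y) i j = 0 := by
    intro i j
    have e1 := hq (Pi.single i 1 + Pi.single j 1)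
    have e2 := hq (Pi.single i 1)
    have e3 := hq (Pi.single j 1)
    have expand : ∀ (u v : Fin n → ℝ),
        (u + v) ⬝ᵥ (X - Y) *ᵥ (u + v) = u ⬝ᵥ (X - Y) *ᵥ u + u ⬝ᵥ (X - Y) *ᵥ v
          + v ⬝ᵥ (X - Y) *ᵥ u + v ⬝ᵥ (X - Y) *ᵥ v := by
      intro u v
      rw [mulVec_add, add_dotProduct, dotProduct_add, dotProduct_add]
      ring
    rw [expand] at e1
    have hij : Pi.single i (1:ℝ) ⬝ᵥ (X - Y) *ᵥ Pi.single j 1 = (X - Y) i j := by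
      rw [mulVec_single, single_dotProduct]
      simp
    have hji : Pi.single j (1:ℝ) ⬝ᵥ (X - Y) *ᵥ Pi.single i 1 = (X - Y) j i := by
      rw [mulVec_single, single_dotProduct]
      simp
    rw [e2, e3, hij, hji, hsymm i j] at e1
    linarith
  have : X - Y = 0 := by
    ext i j; exact hentry i j
  exact sub_eq_zero.mp this

/-- The admissible-scaling set underlying the part metric. -/
def Tset (X Y : Matrix (Fin n) (Fin n) ℝ) : Set ℝ :=
  {α : ℝ | 1 ≤ α ∧ (α • X - Y).PosSemidef ∧ (α • Y - X).PosSemidef}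

lemma Tset_nonempty {X Y : Matrix (Fin n) (Fin n) ℝ} (hX : X.PosDef) (hY : Y.PosDef) :
    (Tset X Y).Nonempty := by
  obtain ⟨mX, hmX, hmXb⟩ := quadLB hX
  obtain ⟨mY, hmY, hmYb⟩ := quadLB hY
  obtain ⟨MX, hMX, hMXb⟩ := quadUB X
  obtain ⟨MY, hMY, hMYb⟩ := quadUB Y
  have hα0 : (0:ℝ) ≤ 1 + MY / mX + MX / mY := by positivity
  refine ⟨1 + MY / mX + MX / mY, ?_, ?_, ?_⟩
  · have h1 : 0 ≤ MY / mX := by positivity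
    have h2 : 0 ≤ MX / mY := by positivity
    show (1:ℝ) ≤ 1 + MY / mX + MX / mY
    linarith
  · refine PosSemidef.of_dotProduct_mulVec_nonneg ((herm_smul hX.1).sub hY.1) fun x => ?_
    rw [star_vec, quad_smul_sub]
    have hxx : 0 ≤ x ⬝ᵥ x := Finset.sum_nonneg fun i _ => mul_self_nonneg (x i)
    have h1 := hmXb x
    have h2 := hMYb x
    have hα : MY ≤ (1 + MY / mX + MX / mY) * mX := by
      rw [add_mul, add_mul, div_mul_cancel₀ _ hmX.ne']
      have : 0 ≤ MX / mY * mX := by positivity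
      linarith
    nlinarith [mul_le_mul_of_nonneg_right hα hxx, mul_le_mul_of_nonneg_left h1 hα0]
  · refine PosSemidef.of_dotProduct_mulVec_nonneg ((herm_smul hY.1).sub hX.1) fun x => ?_
    rw [star_vec, quad_smul_sub]
    have hxx : 0 ≤ x ⬝ᵥ x := Finset.sum_nonneg fun i _ => mul_self_nonneg (x i)
    have h1 := hmYb x
    have h2 := hMXb x
    have hα : MX ≤ (1 + MY / mX + MX / mY) * mY := by
      rw [add_mul, add_mul, div_mul_cancel₀ _ hmY.ne']
      have : 0 ≤ MY / mX * mY := by positivity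
      linarith
    nlinarith [mul_le_mul_of_nonneg_right hα hxx, mul_le_mul_of_nonneg_left h1 hα0]

lemma Tset_bddBelow (X Y : Matrix (Fin n) (Fin n) ℝ) : BddBelow (Tset X Y) :=
  ⟨1, fun _ ha => ha.1⟩

lemma Tset_isClosed {X Y : Matrix (Fin n) (Fin n) ℝ} (hX : X.IsHermitian) (hY : Y.IsHermitian) :
    IsClosed (Tset X Y) := by
  have : Tset X Y = {α : ℝ | 1 ≤ α} ∩
      ({α : ℝ | (α • X - Y).PosSemidef} ∩ {α : ℝ | (α • Y - X).PosSemidef}) := by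
    ext α
    simp [Tset, Set.mem_inter_iff, and_assoc]
  rw [this]
  exact (isClosed_le continuous_const continuous_id).inter
    ((closed_psd X Y hX hY).inter (closed_psd Y X hY hX))

lemma exists_eps {A C : Matrix (Fin n) (Fin n) ℝ} (hA : A.PosDef) (hC : C.PosSemidef) :
    ∃ ε : ℝ, 0 < ε ∧ (A - ε • C).PosSemidef := by
  obtain ⟨m, hm, hmb⟩ := quadLB hA
  obtain ⟨M, hM, hMb⟩ := quadUB C
  refine ⟨m / M, div_pos hm hM, PosSemidef.of_dotProduct_mulVec_nonneg (hA.1.sub (herm_smul hC.1)) fun x => ?_⟩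
  rw [star_vec, sub_mulVec, dotProduct_sub, smul_mulVec, dotProduct_smul, smul_eq_mul]
  have hxx : 0 ≤ x ⬝ᵥ x := Finset.sum_nonneg fun i _ => mul_self_nonneg (x i)
  have h1 := hmb x
  have h2 := hMb x
  have key : m / M * (x ⬝ᵥ C *ᵥ x) ≤ m / M * (M * (x ⬝ᵥ x)) :=
    mul_le_mul_of_nonneg_left h2 (by positivity)
  have heq : m / M * (M * (x ⬝ᵥ x)) = m * (x ⬝ᵥ x) := by
    field_simp
  linarith

end PMHelper
/-- The part (Birkhoff) metric on positive definite matrices. -/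
noncomputable def partMetric {n : ℕ} (X Y : Matrix (Fin n) (Fin n) ℝ) : ℝ :=
  sInf {d : ℝ | ∃ α : ℝ, 1 ≤ α ∧ d = Real.log α ∧
    (α • X - Y).PosSemidef ∧ (α • Y - X).PosSemidef}

/-- A monotone, strictly subhomogeneous map on positive definite matrices is strictly
contractive at any pair of distinct points for the part metric. -/
theorem part_metric_strict_contraction {n : ℕ}
    (F : Matrix (Fin n) (Fin n) ℝ → Matrix (Fin n) (Fin n) ℝ)
    (hFpd : ∀ X : Matrix (Fin n) (Fin n) ℝ, X.PosDef → (F X).PosDef)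
    (hmono : ∀ X Y : Matrix (Fin n) (Fin n) ℝ,
      Y.PosSemidef → (X - Y).PosSemidef → (F X - F Y).PosSemidef)
    (hsub : ∀ (X : Matrix (Fin n) (Fin n) ℝ) (α : ℝ), X.PosDef → 1 < α →
      (α • F X - F (α • X)).PosDef ∧ (F (α⁻¹ • X) - α⁻¹ • F X).PosDef)
    (X Y : Matrix (Fin n) (Fin n) ℝ)
    (hX : X.PosDef) (hY : Y.PosDef) (hXY : X ≠ Y) :
    partMetric (F X) (F Y) < partMetric X Y := by
  classical
  have hne : (PMHelper.Tset X Y).Nonempty := PMHelper.Tset_nonempty hX hY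
  have hbdd := PMHelper.Tset_bddBelow X Y
  have hmem : sInf (PMHelper.Tset X Y) ∈ PMHelper.Tset X Y :=
    (PMHelper.Tset_isClosed hX.1 hY.1).csInf_mem hne hbdd
  set α₀ := sInf (PMHelper.Tset X Y) with hα₀def
  have h1α : 1 ≤ α₀ := hmem.1
  have hPM : partMetric X Y = Real.log α₀ := by
    apply IsLeast.csInf_eq
    constructor
    · exact ⟨α₀, hmem.1, rfl, hmem.2.1, hmem.2.2⟩
    · rintro d ⟨α, hα1, rfl, hp1, hp2⟩
      have hle : α₀ ≤ α := csInf_le hbdd ⟨hα1, hp1, hp2⟩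
      exact Real.log_le_log (by linarith) hle
  have hα₀ : 1 < α₀ := by
    rcases lt_or_eq_of_le h1α with h | h
    · exact h
    · exfalso; apply hXY
      have h1 : (X - Y).PosSemidef := by
        have := hmem.2.1; rw [← h, one_smul] at this; exact this
      have h2 : (Y - X).PosSemidef := by
        have := hmem.2.2; rw [← h, one_smul] at this; exact this
      exact PMHelper.psd_antisymm h1 h2
  have hFX := hFpd X hX
  have hFY := hFpd Y hY
  have hA : (α₀ • F X - F Y).PosDef := by
    have hm := hmono (α₀ • X) Y hY.posSemidef hmem.2.1
    have hs := (hsub X α₀ hX hα₀).1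
    have hid : α₀ • F X - F Y = (α₀ • F X - F (α₀ • X)) + (F (α₀ • X) - F Y) := by abel
    rw [hid]; exact hs.add_posSemidef hm
  have hB : (α₀ • F Y - F X).PosDef := by
    have hm := hmono (α₀ • Y) X hX.posSemidef hmem.2.2
    have hs := (hsub Y α₀ hY hα₀).1
    have hid : α₀ • F Y - F X = (α₀ • F Y - F (α₀ • Y)) + (F (α₀ • Y) - F X) := by abel
    rw [hid]; exact hs.add_posSemidef hm
  obtain ⟨ε₁, hε₁, hA1⟩ := PMHelper.exists_eps hA hFX.posSemidef
  obtain ⟨ε₂, hε₂, hB1⟩ := PMHelper.exists_eps hB hFY.posSemidef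
  set ε := min (min ε₁ ε₂) (α₀ - 1) with hεdef
  have hεpos : 0 < ε := lt_min (lt_min hε₁ hε₂) (by linarith)
  have hεle1 : ε ≤ ε₁ := le_trans (min_le_left _ _) (min_le_left _ _)
  have hεle2 : ε ≤ ε₂ := le_trans (min_le_left _ _) (min_le_right _ _)
  have hεle3 : ε ≤ α₀ - 1 := min_le_right _ _
  set β := α₀ - ε with hβdef
  have hβ1 : 1 ≤ β := by rw [hβdef]; linarith
  have hβlt : β < α₀ := by rw [hβdef]; linarith
  have hP1 : (β • F X - F Y).PosSemidef := by
    have hid : β • F X - F Y = ((α₀ • F X - F Y) - ε₁ • F X) + (ε₁ - ε) • F X := by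
      rw [hβdef]; module
    rw [hid]
    exact hA1.add (PMHelper.psd_smul (by linarith) hFX.posSemidef)
  have hP2 : (β • F Y - F X).PosSemidef := by
    have hid : β • F Y - F X = ((α₀ • F Y - F X) - ε₂ • F Y) + (ε₂ - ε) • F Y := by
      rw [hβdef]; module
    rw [hid]
    exact hB1.add (PMHelper.psd_smul (by linarith) hFY.posSemidef)
  have hβmem : Real.log β ∈ {d : ℝ | ∃ α : ℝ, 1 ≤ α ∧ d = Real.log α ∧
      (α • F X - F Y).PosSemidef ∧ (α • F Y - F X).PosSemidef} :=
    ⟨β, hβ1, rfl, hP1, hP2⟩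
  have hbdd' : BddBelow {d : ℝ | ∃ α : ℝ, 1 ≤ α ∧ d = Real.log α ∧
      (α • F X - F Y).PosSemidef ∧ (α • F Y - F X).PosSemidef} := by
    refine ⟨0, ?_⟩
    rintro d ⟨α, hα1, rfl, -, -⟩
    exact Real.log_nonneg hα1
  calc partMetric (F X) (F Y) ≤ Real.log β := csInf_le hbdd' hβmem
    _ < Real.log α₀ := Real.log_lt_log (by linarith) hβlt
    _ = partMetric X Y := hPM.symm
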